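/- Let C be an [n, k] MDS code over 𝔽 = GF(q^ℓ) and let 𝔹 = GF(q). Suppose nodes C₁, ..., C_e are erased (e ≤ n - k) and there exist eℓ dual codewords (C'_{ij1}, ..., C'_{ijn}), i ∈ [e], j ∈ [ℓ], such that the truncated vectors V_{ij} = (C'_{ij1}, ..., C'_{ije}) ∈ 𝔽^e are linearly independent over 𝔹. Then the values C₁, ..., C_e are uniquely determined by the collection of traces {tr_{𝔽/𝔹}(C'_{ijt} C_t) : e+1 ≤ t ≤ n, i ∈ [e], j ∈ [ℓ]} together with the dual codewords. -/

import Mathlib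

/-- for an `[n,k]` MDS code over `𝔽 = GF(q^ℓ)` with `e ≤ n - k`
erased coordinates and `eℓ` dual codewords whose truncations to the erased
coordinates are linearly independent over `𝔹 = GF(q)`, the erased values are
uniquely determined by the traces `tr(C'_{ijt} C_t)`, `t > e`. -/
theorem stmt17 (q ℓ n k e : ℕ) (he : e ≤ n - k) (hen : e ≤ n)
    (B F : Type*) [Field B] [Field F] [Algebra B F] [Fintype B] [Fintype F]
    [DecidableEq F]
    (hB : Fintype.card B = q) (hF : Fintype.card F = q ^ ℓ)
    (C : Submodule F (Fin n → F)) (hk : Module.finrank F C = k)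
    (hMDS : ∀ x ∈ C, x ≠ 0 →
      n - k + 1 ≤ (Finset.univ.filter fun t : Fin n => x t ≠ 0).card)
    (D : Fin e × Fin ℓ → Fin n → F)
    (hdual : ∀ ij : Fin e × Fin ℓ, ∀ c ∈ C, (∑ t, D ij t * c t) = 0)
    (hV : LinearIndependent B fun ij : Fin e × Fin ℓ =>
      fun v : Fin e => D ij (Fin.castLE hen v))
    (c d : Fin n → F) (hc : c ∈ C) (hd : d ∈ C)
    (htr : ∀ (ij : Fin e × Fin ℓ) (t : Fin n), e ≤ (t : ℕ) →
      Algebra.trace B F (D ij t * c t) = Algebra.trace B F (D ij t * d t)) :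
    ∀ v : Fin n, (v : ℕ) < e → c v = d v := by
  -- degenerate cases
  rcases Nat.eq_zero_or_pos e with he0 | hepos
  · intro v hv; omega
  rcases Nat.eq_zero_or_pos ℓ with hl0 | hlpos
  · exfalso
    have : Fintype.card F = 1 := by rw [hF, hl0, pow_zero]
    have h2 : 2 ≤ Fintype.card F := Fintype.one_lt_card
    omega
  have : NeZero e := ⟨hepos.ne'⟩
  have : NeZero ℓ := ⟨hlpos.ne'⟩
  -- basic facts about the extension
  have hq2 : 2 ≤ q := hB ▸ Fintype.one_lt_card
  have hrank : Module.finrank B F = ℓ := by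
    have hcard : Fintype.card F = q ^ Module.finrank B F := by
      rw [← hB]; exact Module.card_eq_pow_finrank
    have := hF.symm.trans hcard
    exact (Nat.pow_right_injective hq2 this).symm
  -- the difference on the erased coordinates
  set y : Fin e → F := fun v => c (Fin.castLE hen v) - d (Fin.castLE hen v) with hy
  set W : Fin e × Fin ℓ → Fin e → F := fun ij v => D ij (Fin.castLE hen v) with hW
  -- sum splitting
  have himg : Finset.univ.filter (fun t : Fin n => (t : ℕ) < e) =
      Finset.univ.image (Fin.castLE hen) := by
    ext t
    simp only [Finset.mem_filter, Finset.mem_univ, true_and, Finset.mem_image]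
    constructor
    · intro h; exact ⟨⟨(t : ℕ), h⟩, by ext; rfl⟩
    · rintro ⟨v, rfl⟩; exact v.2
  have hsplit : ∀ f : Fin n → F, (∑ t, f t) =
      (∑ v : Fin e, f (Fin.castLE hen v)) +
        ∑ t ∈ Finset.univ.filter (fun t : Fin n => e ≤ (t : ℕ)), f t := by
    intro f
    rw [← Finset.sum_filter_add_sum_filter_not Finset.univ
      (fun t : Fin n => (t : ℕ) < e) f]
    congr 1
    · rw [himg, Finset.sum_image (fun a _ b _ h => Fin.castLE_injective hen h)]
    · congr 1
      ext t
      simp [not_lt]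
  -- the B-linear functional w ↦ tr(∑ v, w v * y v)
  let Φ : (Fin e → F) →ₗ[B] F :=
    { toFun := fun w => ∑ v, w v * y v
      map_add' := by intro a b; simp [add_mul, Finset.sum_add_distrib]
      map_smul' := by intro b a; simp [Finset.smul_sum, smul_mul_assoc] }
  let L : (Fin e → F) →ₗ[B] B := (Algebra.trace B F).comp Φ
  -- L vanishes on each W ij
  have hLW : ∀ ij, L (W ij) = 0 := by
    intro ij
    have h0 : (∑ t, D ij t * (c t - d t)) = 0 := by
      have h1 := hdual ij c hc
      have h2 := hdual ij d hd
      have h3 : (∑ t, D ij t * (c t - d t)) =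
          (∑ t, D ij t * c t) - ∑ t, D ij t * d t := by
        rw [← Finset.sum_sub_distrib]
        exact Finset.sum_congr rfl fun t _ => by ring
      rw [h3, h1, h2, sub_zero]
    rw [hsplit] at h0
    have hEq : (∑ v : Fin e, D ij (Fin.castLE hen v) *
        (c (Fin.castLE hen v) - d (Fin.castLE hen v))) =
        - ∑ t ∈ Finset.univ.filter (fun t : Fin n => e ≤ (t : ℕ)),
          D ij t * (c t - d t) := eq_neg_of_add_eq_zero_left h0
    have hL : L (W ij) = Algebra.trace B F
        (∑ v : Fin e, D ij (Fin.castLE hen v) *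
          (c (Fin.castLE hen v) - d (Fin.castLE hen v))) := rfl
    rw [hL, hEq, map_neg, map_sum]
    have hz : ∀ t ∈ Finset.univ.filter (fun t : Fin n => e ≤ (t : ℕ)),
        Algebra.trace B F (D ij t * (c t - d t)) = 0 := by
      intro t ht
      have het := (Finset.mem_filter.1 ht).2
      have hm : D ij t * (c t - d t) = D ij t * c t - D ij t * d t := by ring
      rw [hm, map_sub, htr ij t het, sub_self]
    rw [Finset.sum_congr rfl hz, Finset.sum_const_zero, neg_zero]
  -- W forms a B-basis of (Fin e → F)
  have hcardW : Fintype.card (Fin e × Fin ℓ) = Module.finrank B (Fin e → F) := by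
    simp [Module.finrank_pi_fintype, hrank, Finset.sum_const, mul_comm]
  have hLzero : L = 0 := by
    let bW := basisOfLinearIndependentOfCardEqFinrank hV hcardW
    apply bW.ext
    intro ij
    have hb : bW ij = W ij := by
      simp [bW, coe_basisOfLinearIndependentOfCardEqFinrank]
    rw [hb, hLW ij]; simp
  -- conclude y = 0
  have hy0 : ∀ v : Fin e, y v = 0 := by
    intro v
    apply (traceForm_nondegenerate B F).1 (y v)
    intro z
    have hz := congrArg (fun f => f (Pi.single v z)) hLzero
    simpa [L, Φ, Algebra.traceForm_apply, Pi.single_apply, mul_comm] using hz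
  intro t ht
  have hzz := hy0 ⟨(t : ℕ), ht⟩
  simp only [hy] at hzz
  have htc : Fin.castLE hen ⟨(t : ℕ), ht⟩ = t := by ext; rfl
  rw [htc] at hzz
  exact sub_eq_zero.mp hzz
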